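/- For the Avalanche distribution with parameters N and p ∈ (0, 1/N), the mean satisfies E(X_{N,p}) = Σ_{i=1}^{N} (N!/(N-i)!) * p^i. -/

import Mathlib

open Finset

/-- Density of the Avalanche distribution with parameters `N` and `p`,
evaluated at `b`. -/
noncomputable def avalancheP (N : ℕ) (p : ℝ) (b : ℕ) : ℝ :=
  (N.choose b) * p ^ b * (1 - (b + 1) * p) ^ (N - b) * ((b : ℝ) + 1) ^ ((b : ℤ) - 1)

/-- `Gm p n = ∑_{j=0}^n (n!/(n-j)!) p^j`, the claimed normalized mean. -/
noncomputable def Gm (p : ℝ) (n : ℕ) : ℝ :=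
  ∑ j ∈ range (n + 1), ((n.factorial : ℝ) / ((n - j).factorial : ℝ)) * p ^ j

/-- Abel-type sum `Tm p a n = ∑_k C(n,k) ((k+a)p)^k (1-(k+a)p)^{n-k}`. -/
noncomputable def Tm (p a : ℝ) (n : ℕ) : ℝ :=
  ∑ k ∈ range (n + 1),
    (n.choose k : ℝ) * (((k : ℝ) + a) * p) ^ k * (1 - ((k : ℝ) + a) * p) ^ (n - k)

/-- Abel-type sum with an extra power on the first factor. -/
noncomputable def Wm (p a : ℝ) (n : ℕ) : ℝ :=
  ∑ k ∈ range (n + 1),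
    (n.choose k : ℝ) * (((k : ℝ) + a) * p) ^ (k + 1) * (1 - ((k : ℝ) + a) * p) ^ (n - k)

/-- Closed form for `Wm`. -/
noncomputable def Vm (p a : ℝ) (n : ℕ) : ℝ :=
  ∑ t ∈ range (n + 1),
    ((n.factorial : ℝ) / ((n - t).factorial : ℝ)) * p ^ t * ((a + t) * p) * Gm p (n - t)

lemma Wrec (p a : ℝ) (n : ℕ) :
    Wm p a (n + 1) = a * p * Tm p a (n + 1) + ((n : ℝ) + 1) * p * Wm p (a + 1) n := by
  have h : ∀ k ∈ range (n + 2),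
      ((n + 1).choose k : ℝ) * (((k : ℝ) + a) * p) ^ (k + 1) * (1 - ((k : ℝ) + a) * p) ^ (n + 1 - k)
        = a * p * (((n + 1).choose k : ℝ) * (((k : ℝ) + a) * p) ^ k * (1 - ((k : ℝ) + a) * p) ^ (n + 1 - k))
          + ((k : ℝ) * ((n + 1).choose k : ℝ) * (((k : ℝ) + a) * p) ^ k
              * (1 - ((k : ℝ) + a) * p) ^ (n + 1 - k) * p) := by
    intro k _
    rw [pow_succ]
    ring
  simp only [Wm, Tm]
  rw [Finset.sum_congr rfl h, Finset.sum_add_distrib, ← Finset.mul_sum]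
  congr 1
  rw [Finset.sum_range_succ'
    (fun k => (k : ℝ) * ((n + 1).choose k : ℝ) * (((k : ℝ) + a) * p) ^ k
      * (1 - ((k : ℝ) + a) * p) ^ (n + 1 - k) * p)]
  simp only [Nat.cast_zero, zero_mul, add_zero]
  have h2 : ∀ j ∈ range (n + 1),
      ((j + 1 : ℕ) : ℝ) * ((n + 1).choose (j + 1) : ℝ) * ((((j + 1 : ℕ) : ℝ) + a) * p) ^ (j + 1)
          * (1 - (((j + 1 : ℕ) : ℝ) + a) * p) ^ (n + 1 - (j + 1)) * p
        = ((n : ℝ) + 1) * p * ((n.choose j : ℝ) * (((j : ℝ) + (a + 1)) * p) ^ (j + 1)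
            * (1 - ((j : ℝ) + (a + 1)) * p) ^ (n - j)) := by
    intro j _
    have hc : (j + 1) * (n + 1).choose (j + 1) = (n + 1) * n.choose j := by
      rw [mul_comm]
      exact (Nat.add_one_mul_choose_eq n j).symm
    have hc' : ((j + 1 : ℕ) : ℝ) * ((n + 1).choose (j + 1) : ℝ)
        = ((n : ℝ) + 1) * (n.choose j : ℝ) := by exact_mod_cast congrArg Nat.cast hc
    have he : n + 1 - (j + 1) = n - j := by omega
    have hu : ((j + 1 : ℕ) : ℝ) + a = (j : ℝ) + (a + 1) := by push_cast; ring
    rw [he, hu]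
    linear_combination ((((j : ℝ) + (a + 1)) * p) ^ (j + 1)
      * (1 - ((j : ℝ) + (a + 1)) * p) ^ (n - j) * p) * hc'
  rw [Finset.sum_congr rfl h2, ← Finset.mul_sum]

lemma Trec (p a : ℝ) (n : ℕ) :
    Tm p a (n + 1) = Tm p a n + Wm p (a + 1) n - Wm p a n := by
  have hTW : Tm p a n - Wm p a n
      = (1 - a * p) ^ (n + 1)
        + ∑ j ∈ range n, (n.choose (j + 1) : ℝ) * (((j : ℝ) + (a + 1)) * p) ^ (j + 1)
            * (1 - ((j : ℝ) + (a + 1)) * p) ^ (n - j) := by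
    rw [Tm, Wm, ← Finset.sum_sub_distrib]
    have h1 : ∀ k ∈ range (n + 1),
        (n.choose k : ℝ) * (((k : ℝ) + a) * p) ^ k * (1 - ((k : ℝ) + a) * p) ^ (n - k)
          - (n.choose k : ℝ) * (((k : ℝ) + a) * p) ^ (k + 1) * (1 - ((k : ℝ) + a) * p) ^ (n - k)
        = (n.choose k : ℝ) * (((k : ℝ) + a) * p) ^ k * (1 - ((k : ℝ) + a) * p) ^ ((n - k) + 1) := by
      intro k _
      rw [pow_succ ((1 : ℝ) - ((k : ℝ) + a) * p), pow_succ (((k : ℝ) + a) * p)]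
      ring
    rw [Finset.sum_congr rfl h1, Finset.sum_range_succ'
      (fun k => (n.choose k : ℝ) * (((k : ℝ) + a) * p) ^ k
        * (1 - ((k : ℝ) + a) * p) ^ ((n - k) + 1))]
    have h2 : ∀ j ∈ range n,
        (n.choose (j + 1) : ℝ) * ((((j + 1 : ℕ) : ℝ) + a) * p) ^ (j + 1)
            * (1 - (((j + 1 : ℕ) : ℝ) + a) * p) ^ ((n - (j + 1)) + 1)
        = (n.choose (j + 1) : ℝ) * (((j : ℝ) + (a + 1)) * p) ^ (j + 1)
            * (1 - ((j : ℝ) + (a + 1)) * p) ^ (n - j) := by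
      intro j hj
      rw [mem_range] at hj
      have hb : (((j + 1 : ℕ) : ℝ) + a) * p = ((j : ℝ) + (a + 1)) * p := by push_cast; ring
      have he : (n - (j + 1)) + 1 = n - j := by omega
      rw [hb, he]
    rw [Finset.sum_congr rfl h2]
    norm_num [add_comm]
  have hL : Tm p a (n + 1)
      = (1 - a * p) ^ (n + 1)
        + (Wm p (a + 1) n
          + ∑ j ∈ range n, (n.choose (j + 1) : ℝ) * (((j : ℝ) + (a + 1)) * p) ^ (j + 1)
              * (1 - ((j : ℝ) + (a + 1)) * p) ^ (n - j)) := by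
    rw [Tm, Finset.sum_range_succ'
      (fun k => ((n + 1).choose k : ℝ) * (((k : ℝ) + a) * p) ^ k
        * (1 - ((k : ℝ) + a) * p) ^ (n + 1 - k))]
    have h1 : ∀ j ∈ range (n + 1),
        ((n + 1).choose (j + 1) : ℝ) * ((((j + 1 : ℕ) : ℝ) + a) * p) ^ (j + 1)
            * (1 - (((j + 1 : ℕ) : ℝ) + a) * p) ^ (n + 1 - (j + 1))
        = (n.choose j : ℝ) * (((j : ℝ) + (a + 1)) * p) ^ (j + 1)
              * (1 - ((j : ℝ) + (a + 1)) * p) ^ (n - j)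
          + (n.choose (j + 1) : ℝ) * (((j : ℝ) + (a + 1)) * p) ^ (j + 1)
              * (1 - ((j : ℝ) + (a + 1)) * p) ^ (n - j) := by
      intro j _
      have hb : (((j + 1 : ℕ) : ℝ) + a) * p = ((j : ℝ) + (a + 1)) * p := by push_cast; ring
      have he : n + 1 - (j + 1) = n - j := by omega
      have hch : ((n + 1).choose (j + 1) : ℝ) = (n.choose j : ℝ) + (n.choose (j + 1) : ℝ) := by
        exact_mod_cast congrArg Nat.cast (Nat.choose_succ_succ (n) (j))
      rw [hb, he, hch]
      ring
    rw [Finset.sum_congr rfl h1, Finset.sum_add_distrib, Wm]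
    rw [Finset.sum_range_succ
      (fun j => (n.choose (j + 1) : ℝ) * (((j : ℝ) + (a + 1)) * p) ^ (j + 1)
        * (1 - ((j : ℝ) + (a + 1)) * p) ^ (n - j))]
    norm_num [Nat.choose_succ_self, add_comm]
  rw [hL]
  linarith [hTW]

lemma sum_sum (f : ℕ → ℝ) (n : ℕ) :
    ∑ t ∈ range (n + 1), ∑ j ∈ range (n + 1 - t), f (t + j)
      = ∑ m ∈ range (n + 1), ((m : ℝ) + 1) * f m := by
  induction n with
  | zero => simp
  | succ n ih =>
    have h1 : ∀ t ∈ range (n + 2),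
        ∑ j ∈ range (n + 2 - t), f (t + j)
          = (∑ j ∈ range (n + 1 - t), f (t + j)) + f (n + 1) := by
      intro t ht
      rw [mem_range] at ht
      have h2 : n + 2 - t = (n + 1 - t) + 1 := by omega
      rw [h2, Finset.sum_range_succ]
      congr 2
      omega
    rw [Finset.sum_congr rfl h1, Finset.sum_add_distrib, Finset.sum_const, Finset.card_range,
      Finset.sum_range_succ (fun t => ∑ j ∈ range (n + 1 - t), f (t + j))]
    simp only [Nat.sub_self, Finset.range_zero, Finset.sum_empty, add_zero]
    rw [ih, nsmul_eq_mul, Finset.sum_range_succ (fun m => ((m : ℝ) + 1) * f m) (n + 1)]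
    push_cast
    ring

lemma Grec (p : ℝ) (n : ℕ) :
    Gm p (n + 1) = Gm p n
      + ∑ t ∈ range (n + 1), ((n.factorial : ℝ) / ((n - t).factorial : ℝ)) * p ^ (t + 1) * Gm p (n - t) := by
  have hfac : ∀ m : ℕ, ((m.factorial : ℝ)) ≠ 0 := by
    intro m
    exact_mod_cast m.factorial_ne_zero
  have h1 : ∀ t ∈ range (n + 1),
      ((n.factorial : ℝ) / ((n - t).factorial : ℝ)) * p ^ (t + 1) * Gm p (n - t)
        = ∑ j ∈ range (n + 1 - t), ((n.factorial : ℝ) / ((n - (t + j)).factorial : ℝ)) * p ^ ((t + j) + 1) := by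
    intro t ht
    rw [mem_range] at ht
    rw [Gm, Finset.mul_sum]
    have hr : (n - t) + 1 = n + 1 - t := by omega
    rw [hr]
    refine Finset.sum_congr rfl ?_
    intro j hj
    rw [mem_range] at hj
    have h2 : (n - t) - j = n - (t + j) := by omega
    rw [h2]
    have h3 : p ^ (t + j + 1) = p ^ (t + 1) * p ^ j := by
      rw [← pow_add]
      ring_nf
    rw [h3]
    field_simp
  rw [Finset.sum_congr rfl h1,
    sum_sum (fun m => ((n.factorial : ℝ) / ((n - m).factorial : ℝ)) * p ^ (m + 1)) n]
  -- peel and compare termwise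
  rw [Gm, Gm, Finset.sum_range_succ'
      (fun j => (((n + 1).factorial : ℝ) / ((n + 1 - j).factorial : ℝ)) * p ^ j),
    Finset.sum_range_succ'
      (fun j => ((n.factorial : ℝ) / ((n - j).factorial : ℝ)) * p ^ j),
    Finset.sum_range_succ
      (fun m => ((m : ℝ) + 1) * (((n.factorial : ℝ) / ((n - m).factorial : ℝ)) * p ^ (m + 1))),
    Finset.sum_range_succ
      (fun m => (((n + 1).factorial : ℝ) / ((n + 1 - (m + 1)).factorial : ℝ)) * p ^ (m + 1))]
  have hterm : ∀ m ∈ range n,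
      (((n + 1).factorial : ℝ) / ((n + 1 - (m + 1)).factorial : ℝ)) * p ^ (m + 1)
        = ((n.factorial : ℝ) / ((n - (m + 1)).factorial : ℝ)) * p ^ (m + 1)
          + ((m : ℝ) + 1) * (((n.factorial : ℝ) / ((n - m).factorial : ℝ)) * p ^ (m + 1)) := by
    intro m hm
    rw [mem_range] at hm
    obtain ⟨d, hd⟩ : ∃ d, n = m + d + 1 := ⟨n - m - 1, by omega⟩
    subst hd
    have e1 : m + d + 1 + 1 - (m + 1) = d + 1 := by omega
    have e2 : m + d + 1 - (m + 1) = d := by omega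
    have e3 : m + d + 1 - m = d + 1 := by omega
    rw [e1, e2, e3, Nat.factorial_succ (m + d + 1), Nat.factorial_succ d]
    push_cast
    field_simp
    ring
  rw [Finset.sum_congr rfl hterm, Finset.sum_add_distrib]
  have e4 : n + 1 - (n + 1) = 0 := by omega
  have e5 : n - n = 0 := by omega
  have e6 : n + 1 - 0 = n + 1 := by omega
  have e7 : n - 0 = n := by omega
  rw [e4, e5, e6, e7, Nat.factorial_succ n]
  simp only [Nat.factorial_zero, Nat.cast_one, Nat.cast_mul, pow_zero]
  push_cast
  field_simp
  ring

lemma TV (p : ℝ) : ∀ n, ∀ a, Tm p a n = Gm p n ∧ Wm p a n = Vm p a n := by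
  intro n
  induction n with
  | zero =>
    intro a
    constructor
    · simp [Tm, Gm]
    · simp [Wm, Vm, Gm]
  | succ n ih =>
    intro a
    have Vdiff : ∀ b : ℝ, Vm p (b + 1) n - Vm p b n
        = ∑ t ∈ range (n + 1),
            ((n.factorial : ℝ) / ((n - t).factorial : ℝ)) * p ^ (t + 1) * Gm p (n - t) := by
      intro b
      rw [Vm, Vm, ← Finset.sum_sub_distrib]
      refine Finset.sum_congr rfl ?_
      intro t _
      rw [pow_succ]
      ring
    have hT : Tm p a (n + 1) = Gm p (n + 1) := by
      rw [Trec, (ih a).1, (ih (a + 1)).2, (ih a).2, Grec]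
      have := Vdiff a
      linarith
    refine ⟨hT, ?_⟩
    rw [Wrec, hT, (ih (a + 1)).2]
    symm
    rw [Vm, Finset.sum_range_succ'
      (fun t => (((n + 1).factorial : ℝ) / ((n + 1 - t).factorial : ℝ)) * p ^ t
        * ((a + t) * p) * Gm p (n + 1 - t))]
    have h1 : ∀ j ∈ range (n + 1),
        (((n + 1).factorial : ℝ) / ((n + 1 - (j + 1)).factorial : ℝ)) * p ^ (j + 1)
            * ((a + ((j + 1 : ℕ) : ℝ)) * p) * Gm p (n + 1 - (j + 1))
        = ((n : ℝ) + 1) * p * (((n.factorial : ℝ) / ((n - j).factorial : ℝ)) * p ^ j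
            * (((a + 1) + (j : ℝ)) * p) * Gm p (n - j)) := by
      intro j _
      have e1 : n + 1 - (j + 1) = n - j := by omega
      rw [e1, Nat.factorial_succ n, pow_succ]
      push_cast
      ring
    rw [Finset.sum_congr rfl h1, ← Finset.mul_sum]
    have e2 : n + 1 - 0 = n + 1 := rfl
    rw [e2]
    simp only [Nat.cast_zero, add_zero, pow_zero, div_self
      (by exact_mod_cast (n + 1).factorial_ne_zero : ((n + 1).factorial : ℝ) ≠ 0)]
    rw [Vm]
    ring

theorem avalanche_mean (N : ℕ) (hN : 0 < N) (p : ℝ) (hp : 0 < p) (hp' : p < 1 / N) :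
    ∑ b ∈ Finset.range (N + 1), (b : ℝ) * avalancheP N p b
      = ∑ i ∈ Finset.Icc 1 N, ((N.factorial : ℝ) / (N - i).factorial) * p ^ i := by
  obtain ⟨n, rfl⟩ : ∃ n, N = n + 1 := ⟨N - 1, by omega⟩
  -- Left-hand side equals (n+1) * p * Tm p 2 n
  have hLHS : ∑ b ∈ Finset.range (n + 1 + 1), (b : ℝ) * avalancheP (n + 1) p b
      = ((n : ℝ) + 1) * p * Tm p 2 n := by
    rw [Finset.sum_range_succ' (fun b => (b : ℝ) * avalancheP (n + 1) p b)]
    have hL : ∀ k ∈ range (n + 1),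
        (((k + 1 : ℕ)) : ℝ) * avalancheP (n + 1) p (k + 1)
          = ((n : ℝ) + 1) * p * ((n.choose k : ℝ) * (((k : ℝ) + 2) * p) ^ k
              * (1 - ((k : ℝ) + 2) * p) ^ (n - k)) := by
      intro k _
      rw [avalancheP]
      have hb : (((k + 1 : ℕ)) : ℝ) + 1 = (k : ℝ) + 2 := by push_cast; ring
      have hz : ((((k + 1 : ℕ)) : ℝ) + 1) ^ ((((k + 1 : ℕ)) : ℤ) - 1) = ((k : ℝ) + 2) ^ k := by
        have he : (((k + 1 : ℕ)) : ℤ) - 1 = (k : ℤ) := by push_cast; ring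
        rw [hb, he, zpow_natCast]
      have he2 : n + 1 - (k + 1) = n - k := by omega
      have hc : (k + 1) * (n + 1).choose (k + 1) = (n + 1) * n.choose k := by
        rw [mul_comm]
        exact (Nat.add_one_mul_choose_eq n k).symm
      have hc' : (((k + 1 : ℕ)) : ℝ) * (((n + 1).choose (k + 1)) : ℝ)
          = ((n : ℝ) + 1) * (n.choose k : ℝ) := by exact_mod_cast congrArg Nat.cast hc
      rw [hz, hb, he2, mul_pow, pow_succ]
      linear_combination (((k : ℝ) + 2) ^ k * p ^ k * p
        * (1 - ((k : ℝ) + 2) * p) ^ (n - k)) * hc'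
    rw [Finset.sum_congr rfl hL, ← Finset.mul_sum, Tm]
    norm_num
  rw [hLHS, (TV p n 2).1]
  -- Right-hand side equals (n+1) * p * Gm p n
  rw [← Finset.Ico_add_one_right_eq_Icc, Finset.sum_Ico_eq_sum_range]
  have hR : ∀ i ∈ range (n + 1 + 1 - 1),
      (((n + 1).factorial : ℝ) / ((n + 1 - (1 + i)).factorial : ℝ)) * p ^ (1 + i)
        = ((n : ℝ) + 1) * p * (((n.factorial : ℝ) / ((n - i).factorial : ℝ)) * p ^ i) := by
    intro i _
    have he : n + 1 - (1 + i) = n - i := by omega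
    have hp1 : p ^ (1 + i) = p * p ^ i := by rw [pow_add, pow_one]
    rw [he, hp1, Nat.factorial_succ n]
    push_cast
    ring
  rw [Finset.sum_congr rfl hR, ← Finset.mul_sum]
  have : n + 1 + 1 - 1 = n + 1 := rfl
  rw [this, ← Gm]
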